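/- For any Leibniz algebra g over a field k, the universal algebra A(k, g) associated to the 1-dimensional abelian Leibniz algebra k and g is isomorphic as a commutative k-algebra to the symmetric algebra S(g/g') of the quotient of g by its derived subalgebra g' = [g,g]. In particular, if g is perfect (g' = g), then A(k,g) ≅ k. -/

import Mathlib

open TensorProduct MvPolynomial

/-- The universal polynomial `P_{(a,i,j)} = Σ_u β^u_{ij} X_{au} - Σ_{s,t} τ^a_{st} X_{si} X_{tj}`. -/
noncomputable def univPoly {k : Type*} [Field k] {n : ℕ} {I : Type*}
    (τ : Fin n → Fin n → Fin n → k) (β : I → I → I →₀ k)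
    (a : Fin n) (i j : I) : MvPolynomial (Fin n × I) k :=
  (β i j).sum (fun u c => C c * X (a, u)) -
    ∑ s : Fin n, ∑ t : Fin n, C (τ s t a) * X (s, i) * X (t, j)

/-- The ideal generated by the universal polynomials. -/
noncomputable def univIdeal {k : Type*} [Field k] {n : ℕ} {I : Type*}
    (τ : Fin n → Fin n → Fin n → k) (β : I → I → I →₀ k) :
    Ideal (MvPolynomial (Fin n × I) k) :=
  Ideal.span (Set.range fun p : Fin n × I × I => univPoly τ β p.1 p.2.1 p.2.2)

/-- The universal algebra `A(h,g)`. -/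
noncomputable abbrev univAlg {k : Type*} [Field k] {n : ℕ} {I : Type*}
    (τ : Fin n → Fin n → Fin n → k) (β : I → I → I →₀ k) :=
  MvPolynomial (Fin n × I) k ⧸ univIdeal τ β

/-- The generator `x_{si}` of `A(h,g)`. -/
noncomputable def univGen {k : Type*} [Field k] {n : ℕ} {I : Type*}
    (τ : Fin n → Fin n → Fin n → k) (β : I → I → I →₀ k)
    (s : Fin n) (i : I) : univAlg τ β :=
  Ideal.Quotient.mk (univIdeal τ β) (X (s, i))

set_option maxHeartbeats 2000000 in
/-- for any Leibniz algebra `g` (free on `I` with structure constants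
`β` and bracket `bG`), the universal algebra `A(k, g)` associated to the
`1`-dimensional abelian Leibniz algebra `k` is isomorphic as a `k`-algebra to the
symmetric algebra `S(g/g')` of `g` modulo its derived subalgebra `g' = [g,g]`
(here `S` is any algebra satisfying the universal property of the symmetric algebra
of `g/g'`).  In particular, if `g` is perfect (`g' = g`) then `A(k,g) ≅ k`. -/
theorem stmt_8 (k : Type u) [Field k] (I : Type u) (β : I → I → I →₀ k)
    (bG : (I →₀ k) →ₗ[k] (I →₀ k) →ₗ[k] (I →₀ k))
    (hbG : ∀ i j : I, bG (Finsupp.single i 1) (Finsupp.single j 1) = β i j)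
    (hLG : ∀ x y z, bG x (bG y z) = bG (bG x y) z - bG (bG x z) y)
    (G' : Submodule k (I →₀ k))
    (hG' : G' = Submodule.span k (Set.range fun p : (I →₀ k) × (I →₀ k) => bG p.1 p.2))
    (S : Type u) [CommRing S] [Algebra k S] (ι : ((I →₀ k) ⧸ G') →ₗ[k] S)
    (hS : ∀ (A : Type u) [CommRing A] [Algebra k A] (φ : ((I →₀ k) ⧸ G') →ₗ[k] A),
      ∃! θ : S →ₐ[k] A, θ.toLinearMap ∘ₗ ι = φ) :
    Nonempty (univAlg (fun _ _ _ => (0 : k) : Fin 1 → Fin 1 → Fin 1 → k) β ≃ₐ[k] S) ∧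
      (G' = ⊤ → Nonempty
        (univAlg (fun _ _ _ => (0 : k) : Fin 1 → Fin 1 → Fin 1 → k) β ≃ₐ[k] k)) := by
  classical
  set τ : Fin 1 → Fin 1 → Fin 1 → k := (fun _ _ _ => 0) with hτ
  -- the linear map sending a finsupp to the corresponding linear polynomial
  let lin0 : (I →₀ k) →ₗ[k] MvPolynomial (Fin 1 × I) k :=
    Finsupp.lsum k (fun u => LinearMap.toSpanSingleton k _ (X ((0 : Fin 1), u)))
  have hlin0_single : ∀ (u : I) (c : k),
      lin0 (Finsupp.single u c) = c • X ((0 : Fin 1), u) := by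
    intro u c
    simp [lin0, LinearMap.toSpanSingleton_apply]
  let lin : (I →₀ k) →ₗ[k] univAlg τ β :=
    (Ideal.Quotient.mkₐ k (univIdeal τ β)).toLinearMap ∘ₗ lin0
  have hpoly : ∀ i j : I, univPoly τ β 0 i j = lin0 (β i j) := by
    intro i j
    simp [univPoly, lin0, Finsupp.lsum_apply, Finsupp.sum,
      LinearMap.toSpanSingleton_apply, C_mul', hτ]
  have hgen : ∀ i j : I, lin (β i j) = 0 := by
    intro i j
    have hmem : univPoly τ β 0 i j ∈ univIdeal τ β :=
      Ideal.subset_span ⟨(0, i, j), rfl⟩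
    have : lin (β i j) = Ideal.Quotient.mk (univIdeal τ β) (univPoly τ β 0 i j) := by
      simp [lin, hpoly i j]
    rw [this, Ideal.Quotient.eq_zero_iff_mem]
    exact hmem
  have hker : ∀ x y : I →₀ k, lin (bG x y) = 0 := by
    intro x y
    induction x using Finsupp.induction_linear with
    | zero => simp
    | add a b ha hb => rw [map_add, LinearMap.add_apply, map_add, ha, hb, add_zero]
    | single i c =>
      induction y using Finsupp.induction_linear with
      | zero => simp
      | add a b ha hb => rw [map_add, map_add, ha, hb, add_zero]
      | single j d =>
        have h1 : (Finsupp.single i c : I →₀ k) = c • Finsupp.single i 1 := by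
          simp
        have h2 : (Finsupp.single j d : I →₀ k) = d • Finsupp.single j 1 := by
          simp
        rw [h1, h2]
        simp only [map_smul, LinearMap.smul_apply, hbG i j, hgen i j, smul_zero]
  have hle : G' ≤ LinearMap.ker lin := by
    rw [hG', Submodule.span_le]
    rintro _ ⟨⟨x, y⟩, rfl⟩
    exact hker x y
  let ι' : ((I →₀ k) ⧸ G') →ₗ[k] univAlg τ β := G'.liftQ lin hle
  have hι' : ∀ x : I →₀ k, ι' (Submodule.Quotient.mk x) = lin x := fun x => rfl
  -- universal property of `univAlg τ β` as the symmetric algebra of `(I →₀ k) ⧸ G'`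
  have hUP : ∀ (A : Type u) [CommRing A] [Algebra k A]
      (φ : ((I →₀ k) ⧸ G') →ₗ[k] A),
      ∃! θ : univAlg τ β →ₐ[k] A, θ.toLinearMap ∘ₗ ι' = φ := by
    intro A _ _ φ
    let ψ : (I →₀ k) →ₗ[k] A := φ ∘ₗ G'.mkQ
    have hψβ : ∀ i j : I, ψ (β i j) = 0 := by
      intro i j
      have hm : β i j ∈ G' := by
        rw [hG']
        exact Submodule.subset_span ⟨(Finsupp.single i 1, Finsupp.single j 1), hbG i j⟩
      have : (G'.mkQ) (β i j) = 0 := (Submodule.Quotient.mk_eq_zero G').mpr hm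
      simp [ψ, this]
    let f0 : MvPolynomial (Fin 1 × I) k →ₐ[k] A :=
      aeval (fun p : Fin 1 × I => ψ (Finsupp.single p.2 1))
    have hf0X : ∀ u : I, f0 (X ((0 : Fin 1), u)) = ψ (Finsupp.single u 1) := by
      intro u; simp [f0]
    have hf0lin : ∀ x : I →₀ k, f0 (lin0 x) = ψ x := by
      intro x
      induction x using Finsupp.induction_linear with
      | zero => simp
      | add a b ha hb => rw [map_add, map_add, ha, hb, map_add]
      | single u c =>
        have h1 : (Finsupp.single u c : I →₀ k) = c • Finsupp.single u 1 := by simp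
        rw [hlin0_single, map_smul, hf0X, h1, map_smul]
    have hkill : ∀ p ∈ univIdeal τ β, f0 p = 0 := by
      have hsub : univIdeal τ β ≤ RingHom.ker f0.toRingHom := by
        rw [univIdeal, Ideal.span_le]
        rintro _ ⟨⟨a, i, j⟩, rfl⟩
        rw [SetLike.mem_coe, RingHom.mem_ker]
        have ha : a = 0 := Subsingleton.elim a 0
        show f0 (univPoly τ β a i j) = 0
        rw [ha, hpoly i j, hf0lin, hψβ]
      intro p hp
      exact RingHom.mem_ker.mp (hsub hp)
    let θ : univAlg τ β →ₐ[k] A := Ideal.Quotient.liftₐ (univIdeal τ β) f0 hkill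
    have hθmk : ∀ p, θ (Ideal.Quotient.mk (univIdeal τ β) p) = f0 p := by
      intro p; rfl
    have hθι' : θ.toLinearMap ∘ₗ ι' = φ := by
      apply LinearMap.ext
      intro xq
      obtain ⟨x, rfl⟩ := Submodule.Quotient.mk_surjective G' xq
      show θ (ι' (Submodule.Quotient.mk x)) = φ (Submodule.Quotient.mk x)
      rw [hι']
      show θ (Ideal.Quotient.mk (univIdeal τ β) (lin0 x)) = _
      rw [hθmk, hf0lin]
      rfl
    refine ⟨θ, hθι', ?_⟩
    intro θ' hθ'
    have key : ∀ (θ'' : univAlg τ β →ₐ[k] A), θ''.toLinearMap ∘ₗ ι' = φ →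
        ∀ u : I, θ'' (Ideal.Quotient.mk (univIdeal τ β) (X ((0 : Fin 1), u))) =
          φ (Submodule.Quotient.mk (Finsupp.single u 1)) := by
      intro θ'' h u
      have e0 : lin (Finsupp.single u 1) =
          Ideal.Quotient.mk (univIdeal τ β) (X ((0 : Fin 1), u)) := by
        show Ideal.Quotient.mkₐ k (univIdeal τ β) (lin0 (Finsupp.single u 1)) = _
        rw [hlin0_single, one_smul, Ideal.Quotient.mkₐ_eq_mk]
      have hc := LinearMap.congr_fun h (Submodule.Quotient.mk (Finsupp.single u 1))
      rw [LinearMap.comp_apply, hι', e0] at hc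
      exact hc
    refine Ideal.Quotient.algHom_ext k (MvPolynomial.algHom_ext ?_)
    rintro ⟨s, u⟩
    have hs : s = 0 := Subsingleton.elim s 0
    subst hs
    show θ' (Ideal.Quotient.mk (univIdeal τ β) (X ((0 : Fin 1), u))) =
      θ (Ideal.Quotient.mk (univIdeal τ β) (X ((0 : Fin 1), u)))
    rw [key θ' hθ' u, key θ hθι' u]
  constructor
  · -- main isomorphism
    obtain ⟨θS, hθS, uniqS⟩ := hS (univAlg τ β) ι'
    obtain ⟨θQ, hθQ, uniqQ⟩ := hUP S ι
    have h1 : θQ.comp θS = AlgHom.id k S := by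
      obtain ⟨θ0, hθ0, uniq0⟩ := hS S ι
      have e1 : (θQ.comp θS).toLinearMap ∘ₗ ι = ι := by
        rw [AlgHom.comp_toLinearMap, LinearMap.comp_assoc, hθS, hθQ]
      have e2 : (AlgHom.id k S).toLinearMap ∘ₗ ι = ι := by
        apply LinearMap.ext; intro x; rfl
      exact (uniq0 _ e1).trans (uniq0 _ e2).symm
    have h2 : θS.comp θQ = AlgHom.id k (univAlg τ β) := by
      obtain ⟨θ0, hθ0, uniq0⟩ := hUP (univAlg τ β) ι'
      have e1 : (θS.comp θQ).toLinearMap ∘ₗ ι' = ι' := by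
        rw [AlgHom.comp_toLinearMap, LinearMap.comp_assoc, hθQ, hθS]
      have e2 : (AlgHom.id k (univAlg τ β)).toLinearMap ∘ₗ ι' = ι' := by
        apply LinearMap.ext; intro x; rfl
      exact (uniq0 _ e1).trans (uniq0 _ e2).symm
    exact ⟨AlgEquiv.ofAlgHom θQ θS h1 h2⟩
  · -- perfect case
    intro htop
    haveI : Subsingleton ((I →₀ k) ⧸ G') :=
      (Submodule.Quotient.subsingleton_iff (p := G')).mpr htop
    have heq : ∀ {A : Type u} [AddCommGroup A] [Module k A]
        (f g : ((I →₀ k) ⧸ G') →ₗ[k] A), f = g := by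
      intro A _ _ f g
      apply LinearMap.ext
      intro x
      rw [Subsingleton.elim x 0, map_zero, map_zero]
    obtain ⟨θk, hθk, uniqk⟩ := hUP k 0
    have h1 : θk.comp (Algebra.ofId k (univAlg τ β)) = AlgHom.id k k := by
      apply AlgHom.ext
      intro x
      show θk (algebraMap k (univAlg τ β) x) = x
      rw [AlgHom.commutes]
      simp
    have h2 : (Algebra.ofId k (univAlg τ β)).comp θk = AlgHom.id k (univAlg τ β) := by
      obtain ⟨θ0, hθ0, uniq0⟩ := hUP (univAlg τ β) ι'
      exact (uniq0 _ (heq _ _)).trans (uniq0 _ (heq _ _)).symm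
    exact ⟨AlgEquiv.ofAlgHom θk (Algebra.ofId k (univAlg τ β)) h1 h2⟩
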